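/- Let F be a free group of finite rank d, let R ⊆ F be a finite subset with |R| = r, and let G = F/⟪R⟫^F. Let H be a subgroup of G of finite index j = [G : H]. Then there exist a free group F' of rank (d - 1)·j + 1 and a finite subset R' ⊆ F' with |R'| ≤ r·j such that H ≅ F'/⟪R'⟫^{F'}. In particular, ((d-1)j + 1) - rj - 1 ≥ (d - r - 1)·j. -/

import Mathlib

noncomputable section
open CategoryTheory CategoryTheory.ActionCategory CategoryTheory.SingleObj Quiver FreeGroup
open IsFreeGroupoid IsFreeGroupoid.SpanningTree Subgroup
open scoped Classical

namespace DefAux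

universe v u

section










set_option linter.unusedVariables false in
def freeGroupoidOfFreeGroup (α A : Type u) [MulAction (FreeGroup α) A] :
    IsFreeGroupoid (ActionCategory (FreeGroup α) A) where
  quiverGenerators :=
    ⟨fun a b => { e : α // FreeGroup.of e • a.back = b.back }⟩
  of := fun (e : { e // _ }) => ⟨FreeGroup.of e.val, e.property⟩
  unique_lift := by
    intro X _ f
    let f' : α → (A → X) ⋊[mulAutArrow] FreeGroup α := fun e =>
      ⟨fun b => @f ⟨(), _⟩ ⟨(), b⟩ ⟨e, smul_inv_smul _ b⟩, FreeGroup.of e⟩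
    have huniq : ∃! F : FreeGroup α →* (A → X) ⋊[mulAutArrow] FreeGroup α,
        ∀ a, F (FreeGroup.of a) = f' a :=
      ⟨FreeGroup.lift f', fun a => FreeGroup.lift_apply_of,
        fun F hF => FreeGroup.ext_hom _ _ fun a => by simp [hF a]⟩
    rcases huniq with ⟨F', hF', uF'⟩
    refine ⟨uncurry F' ?_, ?_, ?_⟩
    · suffices SemidirectProduct.rightHom.comp F' = MonoidHom.id _ by
        exact DFunLike.ext_iff.mp this
      apply FreeGroup.ext_hom; intro x
      rw [MonoidHom.comp_apply, hF']
      rfl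
    · rintro ⟨⟨⟩, a : A⟩ ⟨⟨⟩, b⟩ ⟨e, h : FreeGroup.of e • a = b⟩
      change (F' (FreeGroup.of _)).left _ = _
      rw [hF']
      cases inv_smul_eq_iff.mpr h.symm
      rfl
    · intro E hE
      have : curry E = F' := by
        apply uF'
        intro e
        ext
        · convert! hE _ _ _
          rfl
        · rfl
      apply Functor.hext
      · intro
        apply Unit.ext
      · refine ActionCategory.cases ?_
        intros
        subst this
        rfl



end
section











variable {G : Type u} [Groupoid.{u} G] [IsFreeGroupoid G]
  (T : WideSubquiver (Symmetrify <| IsFreeGroupoid.Generators G)) [Arborescence T]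

def endBasis : FreeGroupBasis
    ((wideSubquiverEquivSetTotal <| wideSubquiverSymmetrify T)ᶜ : Set _)
    (CategoryTheory.End (show G from Quiver.root T)) :=
  FreeGroupBasis.ofUniqueLift ((wideSubquiverEquivSetTotal <| wideSubquiverSymmetrify T)ᶜ : Set _)
    (fun e => loopOfHom T (of e.val.hom))
    (by
      intro X _ f
      let f' : Labelling (IsFreeGroupoid.Generators G) X := fun a b e =>
        if h : e ∈ wideSubquiverSymmetrify T a b then 1 else f ⟨⟨a, b, e⟩, h⟩
      rcases unique_lift f' with ⟨F', hF', uF'⟩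
      refine ⟨F'.mapEnd _, ?_, ?_⟩
      · suffices ∀ {x y} (q : x ⟶ y), F'.map (loopOfHom T q) = (F'.map q : X) by
          rintro ⟨⟨a, b, e⟩, h⟩
          erw [Functor.mapEnd_apply, this, hF']
          exact dif_neg h
        intros x y q
        suffices ∀ {a} (p : Path (Quiver.root T) a), F'.map (homOfPath T p) = 1 by
          simp only [this, treeHom, comp_as_mul, inv_as_inv, loopOfHom, inv_one, mul_one,
            one_mul, Functor.map_inv, Functor.map_comp]
          rw [this (a := x), this (a := y), inv_one, one_mul, mul_one]
        intro a p
        induction p with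
        | nil => exact F'.map_id _
        | cons p e ih =>
          erw [homOfPath.eq_2, F'.map_comp, comp_as_mul, ih, mul_one]
          rcases e with ⟨e | e, eT⟩
          · erw [hF']
            exact dif_pos (Or.inl eT)
          · erw [F'.map_inv, inv_as_inv, inv_eq_one, hF']
            exact dif_pos (Or.inr eT)
      · intro E hE
        ext x
        have trh : treeHom T (show G from Quiver.root T) = 𝟙 _ := treeHom_root T
        suffices (functorOfMonoidHom T E).map x = F'.map x by
          have h3 : E (loopOfHom T x) = F'.map x := this
          have h4 : loopOfHom T x = x := by
            unfold loopOfHom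
            simp only [trh]
            exact (Category.id_comp _).trans ((congrArg (x ≫ ·) IsIso.inv_id).trans (Category.comp_id x))
          exact (congrArg E h4.symm).trans h3
        congr
        apply uF'
        intro a b e
        change E (loopOfHom T _) = dite _ _ _
        split_ifs with h
        · rw [loopOfHom_eq_id T e h, ← End.one_def]
          exact E.map_one
        · exact hE ⟨⟨a, b, e⟩, h⟩)



end
section






variable {W : Type u} [Quiver.{v} W] [Arborescence W]

lemma target_ne_root {a b : W} (e : a ⟶ b) : b ≠ Quiver.root W := by
  rintro rfl
  have h : (default : Path (Quiver.root W) a).cons e = Path.nil :=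
    Subsingleton.elim _ _
  simpa using congrArg Path.length h

lemma edge_into_eq {a a' b : W} (e : a ⟶ b) (e' : a' ⟶ b) : a = a' ∧ HEq e e' := by
  have h : (default : Path (Quiver.root W) a).cons e
      = (default : Path (Quiver.root W) a').cons e' := Subsingleton.elim _ _
  injection h with h1 h2 h3 h4
  exact ⟨h1, h4⟩

noncomputable def arborEdgeEquiv : (Σ (a : W) (b : W), a ⟶ b) ≃ {b : W // b ≠ Quiver.root W} := by
  refine Equiv.ofBijective (fun x => ⟨x.2.1, target_ne_root x.2.2⟩) ⟨?_, ?_⟩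
  · rintro ⟨a, b, e⟩ ⟨a', b', e'⟩ h
    obtain rfl : b = b' := congrArg Subtype.val h
    obtain ⟨rfl, he⟩ := edge_into_eq e e'
    cases he
    rfl
  · rintro ⟨b, hb⟩
    have p : Path (Quiver.root W) b := default
    induction p with
    | nil => exact absurd rfl hb
    | cons p e => exact ⟨⟨_, _, e⟩, rfl⟩



end
section






theorem normalClosure_subgroupOf {F : Type*} [Group F] (S : Set F) (K : Subgroup F)
    (hNK : Subgroup.normalClosure S ≤ K) :
    Subgroup.normalClosure {x : K | ∃ (c : F ⧸ K) (g : F), g ∈ S ∧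
        (x : F) = (Quotient.out c)⁻¹ * g * (Quotient.out c)} =
      (Subgroup.normalClosure S).subgroupOf K := by
  apply le_antisymm
  · apply Subgroup.normalClosure_le_normal
    rintro x ⟨c, g, hg, hx⟩
    rw [SetLike.mem_coe, Subgroup.mem_subgroupOf, hx]
    exact Subgroup.normalClosure_normal.conj_mem' g (Subgroup.subset_normalClosure hg) _
  · intro x hx
    rw [Subgroup.mem_subgroupOf] at hx
    set M := Subgroup.normalClosure {x : K | ∃ (c : F ⧸ K) (g : F), g ∈ S ∧
        (x : F) = (Quotient.out c)⁻¹ * g * (Quotient.out c)} with hM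
    have key : Subgroup.normalClosure S ≤ M.map K.subtype := by
      rw [Subgroup.normalClosure]
      rw [Subgroup.closure_le]
      intro y hy
      rw [Group.mem_conjugatesOfSet_iff] at hy
      obtain ⟨g, hg, hconj⟩ := hy
      obtain ⟨f, hf⟩ := isConj_iff.mp hconj
      set c : F ⧸ K := QuotientGroup.mk f⁻¹ with hc
      have hk₀ : (Quotient.out c)⁻¹ * f⁻¹ ∈ K := by
        have h1 : (QuotientGroup.mk (Quotient.out c) : F ⧸ K) = QuotientGroup.mk f⁻¹ :=
          Quotient.out_eq c
        exact QuotientGroup.eq.mp h1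
      have hwK : (Quotient.out c)⁻¹ * g * (Quotient.out c) ∈ K :=
        hNK (Subgroup.normalClosure_normal.conj_mem' g (Subgroup.subset_normalClosure hg) _)
      set w : K := ⟨_, hwK⟩ with hw
      have hwM : w ∈ M := Subgroup.subset_normalClosure ⟨c, g, hg, rfl⟩
      set k₀ : K := ⟨_, hk₀⟩ with hk
      have : k₀⁻¹ * w * k₀ ∈ M := Subgroup.normalClosure_normal.conj_mem' w hwM k₀
      refine ⟨k₀⁻¹ * w * k₀, this, ?_⟩
      show ((k₀⁻¹ * w * k₀ : K) : F) = y
      push_cast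
      rw [← hf]
      simp only [hk, hw]
      group
    obtain ⟨m, hm, hmx⟩ := key hx
    have : m = x := Subtype.ext hmx
    rwa [← this]



end
section










-- generic arborescence lemmas (from w3, assumed present)
variable {W : Type u} [Quiver.{v} W] [Arborescence W]

lemma no_loop_pair {a b : W} (e : a ⟶ b) (f : b ⟶ a) : False := by
  have h1 : (default : Path (Quiver.root W) b) = (default : Path (Quiver.root W) a).cons e :=
    Subsingleton.elim _ _
  have h2 : (default : Path (Quiver.root W) a) = (default : Path (Quiver.root W) b).cons f :=
    Subsingleton.elim _ _
  rw [h1] at h2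
  have h3 := congrArg Path.length h2
  simp [Path.length_cons] at h3
  omega

variable {G : Type u} [Groupoid.{u} G] [IsFreeGroupoid G]
  (T : WideSubquiver (Symmetrify <| IsFreeGroupoid.Generators G)) [Arborescence T]

def treeEdgeEquiv :
    (Σ (a : (T : Type u)) (b : (T : Type u)), a ⟶ b) ≃
      ((wideSubquiverEquivSetTotal <| wideSubquiverSymmetrify T) :
        Set (Total (IsFreeGroupoid.Generators G))) := by
  refine Equiv.ofBijective
    (fun x => match x with
      | ⟨a, b, ⟨Sum.inl e, hf⟩⟩ => ⟨⟨a, b, e⟩, Or.inl hf⟩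
      | ⟨a, b, ⟨Sum.inr e, hf⟩⟩ => ⟨⟨b, a, e⟩, Or.inr hf⟩) ⟨?_, ?_⟩
  · rintro ⟨a, b, ⟨f, hf⟩⟩ ⟨a', b', ⟨f', hf'⟩⟩ h
    match f, hf, f', hf', h with
    | Sum.inl e, hf, Sum.inl e', hf', h =>
      have h2 := congrArg Subtype.val h
      injection h2 with h3 h4 h5
      subst h3; subst h4
      cases h5
      rfl
    | Sum.inr e, hf, Sum.inr e', hf', h =>
      have h2 := congrArg Subtype.val h
      injection h2 with h3 h4 h5
      subst h3; subst h4
      cases h5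
      rfl
    | Sum.inl e, hf, Sum.inr e', hf', h =>
      have h2 := congrArg Subtype.val h
      injection h2 with h3 h4 h5
      subst h3; subst h4
      cases h5
      exact (no_loop_pair (show (a : (T : Type u)) ⟶ b from ⟨Sum.inl e, hf⟩)
        (show (b : (T : Type u)) ⟶ a from ⟨Sum.inr e, hf'⟩)).elim
    | Sum.inr e, hf, Sum.inl e', hf', h =>
      have h2 := congrArg Subtype.val h
      injection h2 with h3 h4 h5
      subst h3; subst h4
      cases h5
      exact (no_loop_pair (show (b : (T : Type u)) ⟶ a from ⟨Sum.inl e, hf'⟩)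
        (show (a : (T : Type u)) ⟶ b from ⟨Sum.inr e, hf⟩)).elim
  · rintro ⟨⟨a, b, e⟩, hx⟩
    rcases hx with h | h
    · exact ⟨⟨a, b, ⟨Sum.inl e, h⟩⟩, rfl⟩
    · exact ⟨⟨b, a, ⟨Sum.inr e, h⟩⟩, rfl⟩



end

section Rank

attribute [-instance] IsFreeGroupoid.actionGroupoidIsFree

attribute [local instance] freeGroupoidOfFreeGroup

def totalEquiv (α A : Type u) [MulAction (FreeGroup α) A] :
    Total (IsFreeGroupoid.Generators (ActionCategory (FreeGroup α) A)) ≃ α × A := by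
  refine Equiv.ofBijective
    (fun x => match x with
      | ⟨a, b, ⟨e, he⟩⟩ => (e, ActionCategory.back a)) ⟨?_, ?_⟩
  · rintro ⟨⟨⟨⟩, a⟩, ⟨⟨⟩, b⟩, ⟨e, he⟩⟩ ⟨⟨⟨⟩, a'⟩, ⟨⟨⟩, b'⟩, ⟨e', he'⟩⟩ h
    obtain ⟨h1, h2⟩ := Prod.mk.injEq .. |>.mp h
    subst h1
    obtain rfl : a = a' := h2
    obtain rfl : b = b' := he.symm.trans he'
    rfl
  · rintro ⟨e, x⟩
    exact ⟨⟨objEquiv (FreeGroup α) A x, objEquiv (FreeGroup α) A (FreeGroup.of e • x),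
      ⟨e, rfl⟩⟩, rfl⟩

lemma card_ne_add_one {X : Type u} [Finite X] (r : X) :
    Nat.card {x : X // x ≠ r} + 1 = Nat.card X := by
  classical
  have h := Set.ncard_add_ncard_compl ({r} : Set X)
  rw [Set.ncard_singleton] at h
  have h2 : Nat.card {x : X // x ≠ r} = ({r} : Set X)ᶜ.ncard := by
    rw [← Nat.card_coe_set_eq]
    exact Nat.card_congr (Equiv.subtypeEquivRight (fun x => by simp))
  omega

theorem free_subgroup_rank (d : ℕ) (K : Subgroup (FreeGroup (Fin d))) (hK : K.FiniteIndex) :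
    ∃ n : ℕ, n + (K.index - 1) = d * K.index ∧ 1 ≤ K.index ∧
      Nonempty (↥K ≃* FreeGroup (Fin n)) := by
  haveI := hK
  set F := FreeGroup (Fin d) with hF
  set A := F ⧸ K with hA
  let V := ActionCategory F A
  let x₀ : V := objEquiv F A ↑(1 : F)
  haveI : CategoryTheory.IsConnected V := inferInstanceAs (CategoryTheory.IsConnected (ActionCategory F A))
  haveI : RootedConnected (show Symmetrify (IsFreeGroupoid.Generators V) from x₀) :=
    @IsFreeGroupoid.generators_connected V _ this _ x₀
  set T := geodesicSubtree (show Symmetrify (IsFreeGroupoid.Generators V) from x₀) with hT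
  let b := endBasis T
  set S := ((wideSubquiverEquivSetTotal <| wideSubquiverSymmetrify T)ᶜ :
    Set (Total (IsFreeGroupoid.Generators V))) with hS
  set Tset := ((wideSubquiverEquivSetTotal <| wideSubquiverSymmetrify T) :
    Set (Total (IsFreeGroupoid.Generators V))) with hTset
  haveI : Finite (Total (IsFreeGroupoid.Generators V)) :=
    Finite.of_equiv _ (totalEquiv (Fin d) A).symm
  haveI : Finite V := Finite.of_equiv _ (objEquiv F A)
  have hjA : Nat.card A = K.index := rfl
  have hTot : Nat.card (Total (IsFreeGroupoid.Generators V)) = d * K.index := by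
    rw [Nat.card_congr (totalEquiv (Fin d) A), Nat.card_prod, Nat.card_eq_fintype_card,
      Fintype.card_fin, hjA]
  haveI : Finite (T : Type) := Finite.of_equiv A (objEquiv F A)
  have hTreeCard : Nat.card ↥Tset + 1 = K.index := by
    rw [Nat.card_congr (treeEdgeEquiv T).symm, Nat.card_congr (arborEdgeEquiv (W := (T : Type)))]
    have := card_ne_add_one (X := (T : Type)) (Quiver.root (T : Type))
    rw [this]
    exact (Nat.card_congr (objEquiv F A).symm).trans hjA
  have hcompl : Nat.card ↥Tset + Nat.card ↥S = Nat.card (Total (IsFreeGroupoid.Generators V)) := by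
    rw [hS, hTset, Nat.card_coe_set_eq, Nat.card_coe_set_eq]
    exact Set.ncard_add_ncard_compl _
  have hindex1 : 1 ≤ K.index := Nat.one_le_iff_ne_zero.mpr hK.index_ne_zero
  refine ⟨Nat.card ↥S, by omega, hindex1, ?_⟩
  have me : ↥K ≃* FreeGroup ↥S := ((endMulEquivSubgroup K).symm.trans b.repr)
  exact ⟨me.trans (FreeGroup.freeGroupCongr (Finite.equivFinOfCardEq rfl))⟩

end Rank

end DefAux

open DefAux in
/-- **Lemma 2.2.** If `G = F/⟪R⟫^F` with `F` free of rank `d` and `|R| = r`, and `H ≤ G`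
has finite index `j`, then `H` has a presentation with `(d-1)·j + 1` generators and at
most `r·j` relators; in particular `δ(H) - 1 ≥ (δ(G) - 1)·[G : H]`. -/
theorem deficiency_of_finite_index_subgroup
    (d r j : ℕ) (R : Finset (FreeGroup (Fin d))) (hcard : R.card = r)
    (H : Subgroup (FreeGroup (Fin d) ⧸
      Subgroup.normalClosure (R : Set (FreeGroup (Fin d)))))
    (hfi : H.FiniteIndex) (hj : H.index = j) :
    (∃ n : ℕ, (n : ℤ) = ((d : ℤ) - 1) * (j : ℤ) + 1 ∧
      ∃ R' : Finset (FreeGroup (Fin n)), R'.card ≤ r * j ∧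
        Nonempty (↥H ≃*
          FreeGroup (Fin n) ⧸ Subgroup.normalClosure (R' : Set (FreeGroup (Fin n))))) ∧
    (((d : ℤ) - 1) * (j : ℤ) + 1) - (r : ℤ) * (j : ℤ) - 1 ≥
      ((d : ℤ) - (r : ℤ) - 1) * (j : ℤ) := by
  refine ⟨?_, ge_of_eq (by ring)⟩
  classical
  let F := FreeGroup (Fin d)
  let N : Subgroup F := Subgroup.normalClosure (R : Set F)
  let π : F →* F ⧸ N := QuotientGroup.mk' N
  let K : Subgroup F := Subgroup.comap π H
  have hsurj : Function.Surjective π := QuotientGroup.mk'_surjective N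
  have hKindex : K.index = j :=
    (Subgroup.index_comap_of_surjective H hsurj).trans hj
  have hjne : j ≠ 0 := by rw [← hj]; exact hfi.index_ne_zero
  have hKfi : K.FiniteIndex := ⟨by rw [hKindex]; exact hjne⟩
  obtain ⟨n, hn, hone, ⟨e⟩⟩ := free_subgroup_rank d K hKfi
  rw [hKindex] at hn hone
  refine ⟨n, ?_, ?_⟩
  · have h1 : ((n + (j - 1) : ℕ) : ℤ) = ((d * j : ℕ) : ℤ) := by rw [hn]
    push_cast [Nat.cast_sub hone] at h1
    linear_combination h1
  · haveI := hKfi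
    haveI : Fintype (F ⧸ K) := Fintype.ofFinite _
    have hNK : N ≤ K := by
      intro x hx
      rw [Subgroup.mem_comap]
      have : π x = 1 := (QuotientGroup.eq_one_iff x).mpr hx
      rw [this]
      exact H.one_mem
    let wfun : (F ⧸ K) × {g // g ∈ R} → ↥K := fun p =>
      ⟨(Quotient.out p.1)⁻¹ * p.2.1 * Quotient.out p.1,
        hNK (Subgroup.normalClosure_normal.conj_mem' _
          (Subgroup.subset_normalClosure p.2.2) _)⟩
    set R'' : Finset ↥K := (Finset.univ (α := (F ⧸ K) × {g // g ∈ R})).image wfun with hR''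
    have hcardR'' : R''.card ≤ r * j := by
      have h1 : R''.card ≤ Fintype.card ((F ⧸ K) × {g // g ∈ R}) := by
        rw [← Finset.card_univ]
        exact Finset.card_image_le
      have h2 : Fintype.card ((F ⧸ K) × {g // g ∈ R}) = j * r := by
        rw [Fintype.card_prod, Fintype.card_coe, hcard, ← Nat.card_eq_fintype_card]
        rw [show Nat.card (F ⧸ K) = K.index from rfl, hKindex]
      exact le_of_le_of_eq h1 (h2.trans (Nat.mul_comm j r))
    have hRset : (↑R'' : Set ↥K) = {x : ↥K | ∃ (c : F ⧸ K) (g : F), g ∈ (↑R : Set F) ∧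
        (x : F) = (Quotient.out c)⁻¹ * g * (Quotient.out c)} := by
      ext x
      constructor
      · intro hx
        obtain ⟨p, -, rfl⟩ := Finset.mem_image.mp hx
        exact ⟨p.1, p.2.1, p.2.2, rfl⟩
      · rintro ⟨c, g, hg, hx⟩
        exact Finset.mem_coe.mpr (Finset.mem_image.mpr
          ⟨(c, ⟨g, hg⟩), Finset.mem_univ _, (Subtype.ext hx).symm⟩)
    have hkerN : Subgroup.normalClosure (↑R'' : Set ↥K) = N.subgroupOf K := by
      rw [hRset]
      exact normalClosure_subgroupOf (↑R : Set F) K hNK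
    let φ : ↥K →* ↥H := MonoidHom.codRestrict (π.comp K.subtype) H (fun x => x.2)
    have hφs : Function.Surjective φ := by
      rintro ⟨h, hh⟩
      obtain ⟨f, hf⟩ := hsurj h
      exact ⟨⟨f, show π f ∈ H by rw [hf]; exact hh⟩, Subtype.ext hf⟩
    have hker : φ.ker = N.subgroupOf K := by
      ext x
      rw [MonoidHom.mem_ker, Subgroup.mem_subgroupOf]
      constructor
      · intro hx
        exact (QuotientGroup.eq_one_iff _).mp (congrArg Subtype.val hx)
      · intro hx
        exact Subtype.ext ((QuotientGroup.eq_one_iff _).mpr hx)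
    have hkerR : φ.ker = Subgroup.normalClosure (↑R'' : Set ↥K) := by rw [hker, hkerN]
    set R' : Finset (FreeGroup (Fin n)) := R''.image e with hR'
    have hmap : Subgroup.map (e : ↥K →* FreeGroup (Fin n))
        (Subgroup.normalClosure (↑R'' : Set ↥K))
        = Subgroup.normalClosure (↑R' : Set (FreeGroup (Fin n))) := by
      have hc : (↑R' : Set (FreeGroup (Fin n))) =
          ⇑(e : ↥K →* FreeGroup (Fin n)) '' (↑R'' : Set ↥K) := by
        rw [hR', Finset.coe_image]
        rfl
      rw [hc]
      exact Subgroup.map_normalClosure _ _ e.surjective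
    let E1 : ↥K ⧸ φ.ker ≃* ↥H := QuotientGroup.quotientKerEquivOfSurjective φ hφs
    let E2 : ↥K ⧸ φ.ker ≃* ↥K ⧸ Subgroup.normalClosure (↑R'' : Set ↥K) :=
      QuotientGroup.quotientMulEquivOfEq hkerR
    let E3 := QuotientGroup.congr (Subgroup.normalClosure (↑R'' : Set ↥K))
      (Subgroup.normalClosure (↑R' : Set (FreeGroup (Fin n)))) e hmap
    exact ⟨R', (Finset.card_image_le).trans hcardR'', ⟨(E1.symm.trans E2).trans E3⟩⟩
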